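/- A pattern φ is functional in a model M (|ρ̄(φ)| = 1 for all valuations ρ) if and only if M ⊨ ∃y.(φ = y), where y ∉ FV(φ). In particular, for a symbol σ, σ_M is a total function (each σ_M(a₁,...,aₙ) is a singleton) iff M ⊨ ∃y. σ(x₁,...,xₙ) = y. -/

import Mathlib

namespace ML

structure Signature where
  S : Type
  Sym : Type
  n : Sym → ℕ
  arg : (f : Sym) → Fin (n f) → S
  res : Sym → S

inductive Pattern (σ : Signature) : σ.S → Type
  | var (s : σ.S) (x : ℕ) : Pattern σ s
  | app (f : σ.Sym) (args : ∀ i : Fin (σ.n f), Pattern σ (σ.arg f i)) : Pattern σ (σ.res f)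
  | neg {s : σ.S} (φ : Pattern σ s) : Pattern σ s
  | and {s : σ.S} (φ ψ : Pattern σ s) : Pattern σ s
  | ex {s : σ.S} (s' : σ.S) (x : ℕ) (φ : Pattern σ s) : Pattern σ s

namespace Pattern

variable {σ : Signature}

def or {s : σ.S} (φ ψ : Pattern σ s) : Pattern σ s := .neg (.and (.neg φ) (.neg ψ))

def imp {s : σ.S} (φ ψ : Pattern σ s) : Pattern σ s := .or (.neg φ) ψ

def piff {s : σ.S} (φ ψ : Pattern σ s) : Pattern σ s := .and (.imp φ ψ) (.imp ψ φ)

def all {s : σ.S} (s' : σ.S) (x : ℕ) (φ : Pattern σ s) : Pattern σ s :=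
  .neg (.ex s' x (.neg φ))

end Pattern

/-- Free variables of a pattern, as sort-variable pairs. -/
def FV {σ : Signature} : {s : σ.S} → Pattern σ s → Set ((s : σ.S) × ℕ)
  | _, .var s x => {⟨s, x⟩}
  | _, .app _ args => ⋃ i, FV (args i)
  | _, .neg φ => FV φ
  | _, .and φ ψ => FV φ ∪ FV ψ
  | _, .ex s' x φ => FV φ \ {⟨s', x⟩}

structure Model (σ : Signature) where
  carrier : σ.S → Type
  nonempty : ∀ s, Nonempty (carrier s)
  interp : (f : σ.Sym) → (∀ i : Fin (σ.n f), carrier (σ.arg f i)) → Set (carrier (σ.res f))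

def Val {σ : Signature} (M : Model σ) := (s : σ.S) → ℕ → M.carrier s

open Classical in
noncomputable def Val.upd {σ : Signature} {M : Model σ} (ρ : Val M) (s : σ.S) (x : ℕ)
    (a : M.carrier s) : Val M :=
  fun s' y => if h : s' = s ∧ y = x then cast (congrArg M.carrier h.1).symm a else ρ s' y

/-- Pattern evaluation: the set of elements matching the pattern. -/
noncomputable def eval {σ : Signature} {M : Model σ} :
    {s : σ.S} → Pattern σ s → Val M → Set (M.carrier s)
  | _, .var s x, ρ => {ρ s x}
  | _, .app f args, ρ =>
      { b | ∃ a : ∀ i, M.carrier (σ.arg f i), (∀ i, a i ∈ eval (args i) ρ) ∧ b ∈ M.interp f a }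
  | _, .neg φ, ρ => (eval φ ρ)ᶜ
  | _, .and φ ψ, ρ => eval φ ρ ∩ eval ψ ρ
  | _, .ex s' x φ, ρ => ⋃ a : M.carrier s', eval φ (ρ.upd s' x a)

def Sat {σ : Signature} (M : Model σ) {s : σ.S} (φ : Pattern σ s) : Prop :=
  ∀ ρ : Val M, eval φ ρ = Set.univ

def Valid {σ : Signature} {s : σ.S} (φ : Pattern σ s) : Prop :=
  ∀ M : Model σ, Sat M φ

end ML
namespace ML

variable {σ : Signature}

/-- The argument sort of a unary (definedness) symbol. -/
def arg1 (d : σ.Sym) (hn : σ.n d = 1) : σ.S := σ.arg d ⟨0, by omega⟩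

/-- Definedness applied to a pattern: `⌈φ⌉`. -/
noncomputable def ceil (d : σ.Sym) (hn : σ.n d = 1) (φ : Pattern σ (arg1 d hn)) :
    Pattern σ (σ.res d) :=
  .app d (fun j => cast (by
    have hj : j = (⟨0, by omega⟩ : Fin (σ.n d)) := Fin.ext (by have := j.isLt; omega)
    rw [hj]; rfl) φ)

/-- The definedness axiom pattern `⌈x⌉`. -/
noncomputable def defAx (d : σ.Sym) (hn : σ.n d = 1) : Pattern σ (σ.res d) :=
  ceil d hn (.var (arg1 d hn) 0)

/-- Totality `⌊φ⌋ ≡ ¬⌈¬φ⌉`. -/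
noncomputable def floor (d : σ.Sym) (hn : σ.n d = 1) (φ : Pattern σ (arg1 d hn)) :
    Pattern σ (σ.res d) :=
  .neg (ceil d hn (.neg φ))

/-- Equality pattern `φ = φ' ≡ ⌊φ ↔ φ'⌋`. -/
noncomputable def eqP (d : σ.Sym) (hn : σ.n d = 1) (φ φ' : Pattern σ (arg1 d hn)) :
    Pattern σ (σ.res d) :=
  floor d hn (φ.piff φ')

/-- Membership pattern `x ∈ φ ≡ ⌈x ∧ φ⌉`. -/
noncomputable def mem (d : σ.Sym) (hn : σ.n d = 1) (x : ℕ) (φ : Pattern σ (arg1 d hn)) :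
    Pattern σ (σ.res d) :=
  ceil d hn ((Pattern.var (arg1 d hn) x).and φ)

/-- The context `σ(φ₁,…,□,…,φₙ)` with `ψ` plugged into the `i`-th position. -/
def plug (f : σ.Sym) (i : Fin (σ.n f)) (args : ∀ j : Fin (σ.n f), Pattern σ (σ.arg f j))
    (ψ : Pattern σ (σ.arg f i)) : Pattern σ (σ.res f) :=
  .app f (fun j => if h : j = i then cast (by rw [h]) ψ else args j)

/-- Bound variables of a pattern. -/
def BV : {s : σ.S} → Pattern σ s → Set ((s : σ.S) × ℕ)
  | _, .var _ _ => ∅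
  | _, .app _ args => ⋃ i, BV (args i)
  | _, .neg φ => BV φ
  | _, .and φ ψ => BV φ ∪ BV ψ
  | _, .ex s' x φ => BV φ ∪ {⟨s', x⟩}

open Classical in
/-- Substitution `φ[ψ/x]` of pattern `ψ` for variable `x` of sort `t` (capture-free
provided the bound variables of `φ` are disjoint from the free variables of `ψ`). -/
noncomputable def subst : {s : σ.S} → Pattern σ s → (t : σ.S) → ℕ → Pattern σ t → Pattern σ s
  | _, .var s' y, t, x, ψ =>
      if h : s' = t ∧ y = x then cast (by rw [h.1]) ψ else .var s' y
  | _, .app f args, t, x, ψ => .app f (fun i => subst (args i) t x ψ)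
  | _, .neg φ, t, x, ψ => .neg (subst φ t x ψ)
  | _, .and φ₁ φ₂, t, x, ψ => .and (subst φ₁ t x ψ) (subst φ₂ t x ψ)
  | _, .ex s' y φ, t, x, ψ =>
      if s' = t ∧ y = x then .ex s' y φ else .ex s' y (subst φ t x ψ)

/-- Semantic entailment from a set of axiom patterns. -/
def Entails (F : Set ((s : σ.S) × Pattern σ s)) {s : σ.S} (φ : Pattern σ s) : Prop :=
  ∀ M : Model σ, (∀ ψ ∈ F, Sat M ψ.2) → Sat M φ

/-- A pattern is functional in `M` iff it evaluates to a singleton under every valuation. -/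
def Functional (M : Model σ) {s : σ.S} (φ : Pattern σ s) : Prop :=
  ∀ ρ : Val M, ∃ a : M.carrier s, eval φ ρ = {a}

section Aux
variable {σ : Signature} {M : Model σ}

lemma upd_same (ρ : Val M) (s : σ.S) (x : ℕ) (a : M.carrier s) :
    (ρ.upd s x a) s x = a := by
  simp [Val.upd]

lemma upd_ne (ρ : Val M) (s : σ.S) (x : ℕ) (a : M.carrier s) (s' : σ.S) (y : ℕ)
    (h : (⟨s', y⟩ : (t : σ.S) × ℕ) ≠ ⟨s, x⟩) : (ρ.upd s x a) s' y = ρ s' y := by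
  have : ¬ (s' = s ∧ y = x) := by
    rintro ⟨rfl, rfl⟩; exact h rfl
  simp [Val.upd, this]

lemma eval_agree : ∀ {s : σ.S} (φ : Pattern σ s) (ρ ρ' : Val M),
    (∀ p ∈ FV φ, ρ p.1 p.2 = ρ' p.1 p.2) → eval φ ρ = eval φ ρ'
  | _, .var s x, ρ, ρ', h => by
      have := h ⟨s, x⟩ rfl
      simp [eval, this]
  | _, .app f args, ρ, ρ', h => by
      have ih : ∀ i, eval (args i) ρ = eval (args i) ρ' := fun i =>
        eval_agree (args i) ρ ρ' (fun p hp => h p (Set.mem_iUnion.2 ⟨i, hp⟩))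
      simp only [eval, ih]
  | _, .neg φ, ρ, ρ', h => by
      simp only [eval, eval_agree φ ρ ρ' h]
  | _, .and φ ψ, ρ, ρ', h => by
      simp only [eval, eval_agree φ ρ ρ' (fun p hp => h p (Or.inl hp)),
        eval_agree ψ ρ ρ' (fun p hp => h p (Or.inr hp))]
  | _, .ex s' x φ, ρ, ρ', h => by
      simp only [eval]
      exact Set.iUnion_congr fun a => eval_agree φ _ _ (fun p hp => by
        by_cases hp' : p = ⟨s', x⟩
        · subst hp'; simp [upd_same]
        · rw [upd_ne ρ s' x a p.1 p.2 (by simpa using hp'),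
            upd_ne ρ' s' x a p.1 p.2 (by simpa using hp')]
          exact h p ⟨hp, hp'⟩)

end Aux
section Aux2
variable {σ : Signature} {M : Model σ} (d : σ.Sym) (hn : σ.n d = 1)

/-- The unique index of the definedness symbol. -/
def i0 : Fin (σ.n d) := ⟨0, by omega⟩

lemma fin_eq (j : Fin (σ.n d)) : j = i0 d hn := Fin.ext (by have := j.isLt; omega)

/-- The one-element argument tuple determined by `c`. -/
def tup (c : M.carrier (arg1 d hn)) : ∀ j : Fin (σ.n d), M.carrier (σ.arg d j) :=
  fun j => cast (congrArg (fun k => M.carrier (σ.arg d k)) (fin_eq d hn j)).symm c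

lemma tup_i0 (c : M.carrier (arg1 d hn)) : tup d hn c (i0 d hn) = c := by
  simp [tup]
  exact cast_eq _ _

lemma tup_eq (a : ∀ j : Fin (σ.n d), M.carrier (σ.arg d j)) :
    a = tup d hn (a (i0 d hn)) := by
  funext j
  rcases fin_eq d hn j with rfl
  simp [tup]

lemma ceil_eval (ψ : Pattern σ (arg1 d hn)) (ρ : Val M) :
    eval (ceil d hn ψ) ρ =
      {b | ∃ c ∈ eval ψ ρ, b ∈ M.interp d (tup d hn c)} := by
  ext b
  simp only [ceil, eval, Set.mem_setOf_eq]
  constructor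
  · rintro ⟨a, h1, h2⟩
    refine ⟨a (i0 d hn), ?_, ?_⟩
    · have := h1 (i0 d hn)
      exact this
    · rwa [← tup_eq d hn a]
  · rintro ⟨c, hc, hb⟩
    refine ⟨tup d hn c, fun j => ?_, hb⟩
    rcases fin_eq d hn j with rfl
    exact hc

end Aux2
section Aux3
variable {σ : Signature} {M : Model σ} (d : σ.Sym) (hn : σ.n d = 1)

/-- The definedness axiom forces `⌈c⌉` to be everything. -/
lemma interp_tup_univ (hdef : Sat M (defAx d hn)) (c : M.carrier (arg1 d hn)) :
    M.interp d (tup d hn c) = Set.univ := by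
  classical
  have ρ0 : Val M := fun s _ => Classical.choice (M.nonempty s)
  have h := hdef (ρ0.upd (arg1 d hn) 0 c)
  rw [defAx, ceil_eval] at h
  ext b
  simp only [Set.mem_univ, iff_true]
  have hb : b ∈ Set.univ := Set.mem_univ b
  rw [← h] at hb
  rcases hb with ⟨c', hc', hb⟩
  have : c' = c := by
    simpa [eval, upd_same] using hc'
  rwa [this] at hb

lemma ceil_eval2 (hdef : Sat M (defAx d hn)) (ψ : Pattern σ (arg1 d hn)) (ρ : Val M) :
    eval (ceil d hn ψ) ρ = {_b | (eval ψ ρ).Nonempty} := by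
  rw [ceil_eval]
  ext b
  simp only [Set.mem_setOf_eq, interp_tup_univ d hn hdef, Set.mem_univ, and_true]
  exact Iff.rfl

lemma floor_eval (hdef : Sat M (defAx d hn)) (ψ : Pattern σ (arg1 d hn)) (ρ : Val M) :
    eval (floor d hn ψ) ρ = {_b | eval ψ ρ = Set.univ} := by
  rw [floor]
  show (eval (ceil d hn ψ.neg) ρ)ᶜ = _
  rw [ceil_eval2 d hn hdef]
  ext b
  simp only [Set.mem_compl_iff, Set.mem_setOf_eq, Set.not_nonempty_iff_eq_empty]
  show eval ψ.neg ρ = ∅ ↔ _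
  rw [show eval ψ.neg ρ = (eval ψ ρ)ᶜ from rfl, Set.compl_empty_iff]

lemma piff_eval {s : σ.S} (φ φ' : Pattern σ s) (ρ : Val M) :
    (eval (φ.piff φ') ρ = Set.univ) ↔ eval φ ρ = eval φ' ρ := by
  simp only [Pattern.piff, Pattern.imp, Pattern.or, eval, Set.eq_univ_iff_forall, Set.ext_iff]
  constructor
  · intro h x
    have := h x
    simp only [Set.mem_inter_iff, Set.mem_compl_iff, Set.mem_union] at this ⊢
    tauto
  · intro h x
    have := h x
    simp only [Set.mem_inter_iff, Set.mem_compl_iff] at this ⊢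
    tauto

lemma eqP_eval (hdef : Sat M (defAx d hn)) (φ φ' : Pattern σ (arg1 d hn)) (ρ : Val M) :
    eval (eqP d hn φ φ') ρ = {_b | eval φ ρ = eval φ' ρ} := by
  rw [eqP, floor_eval d hn hdef]
  ext b
  simp only [Set.mem_setOf_eq, piff_eval]

end Aux3
section Aux4
variable {σ : Signature} {M : Model σ} (d : σ.Sym) (hn : σ.n d = 1)

lemma part1 (hdef : Sat M (defAx d hn)) (φ : Pattern σ (arg1 d hn)) (y : ℕ)
    (hy : (⟨arg1 d hn, y⟩ : (t : σ.S) × ℕ) ∉ FV φ) :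
    Functional M φ ↔
      Sat M (Pattern.ex (arg1 d hn) y (eqP d hn φ (Pattern.var (arg1 d hn) y))) := by
  have key : ∀ (ρ : Val M) (a : M.carrier (arg1 d hn)),
      eval (eqP d hn φ (Pattern.var (arg1 d hn) y)) (ρ.upd (arg1 d hn) y a)
        = {_b | eval φ ρ = {a}} := by
    intro ρ a
    rw [eqP_eval d hn hdef]
    have h1 : eval φ (ρ.upd (arg1 d hn) y a) = eval φ ρ :=
      eval_agree φ _ _ (fun p hp => upd_ne ρ _ _ _ _ _ (fun hpe => hy (hpe ▸ hp)))
    have h2 : eval (Pattern.var (arg1 d hn) y) (ρ.upd (arg1 d hn) y a) = {a} := by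
      show ({(ρ.upd (arg1 d hn) y a) (arg1 d hn) y} : Set _) = {a}
      rw [upd_same]
    rw [h1, h2]
  constructor
  · intro hF ρ
    rcases hF ρ with ⟨a, ha⟩
    apply Set.eq_univ_of_forall
    intro b
    show b ∈ ⋃ a', eval _ (ρ.upd _ y a')
    exact Set.mem_iUnion.2 ⟨a, by rw [key]; exact ha⟩
  · intro hS ρ
    obtain ⟨b0⟩ := M.nonempty (σ.res d)
    have hb : b0 ∈ ⋃ a', eval (eqP d hn φ (Pattern.var (arg1 d hn) y)) (ρ.upd (arg1 d hn) y a') := by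
      have h := hS ρ
      rw [show eval (Pattern.ex (arg1 d hn) y (eqP d hn φ (Pattern.var (arg1 d hn) y))) ρ
          = ⋃ a', eval (eqP d hn φ (Pattern.var (arg1 d hn) y)) (ρ.upd (arg1 d hn) y a') from rfl] at h
      rw [h]; trivial
    rcases Set.mem_iUnion.1 hb with ⟨a, ha⟩
    rw [key] at ha
    exact ⟨a, ha⟩

lemma fv_cast {s t : σ.S} (h : s = t) (hP : Pattern σ s = Pattern σ t) (φ : Pattern σ s) :
    FV (cast hP φ) = FV φ := by subst h; rfl

lemma functional_cast {s t : σ.S} (h : s = t) (hP : Pattern σ s = Pattern σ t)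
    (φ : Pattern σ s) : Functional M (cast hP φ) ↔ Functional M φ := by subst h; rfl

lemma cast_tup_eq {f : σ.Sym} (a : ∀ i : Fin (σ.n f), M.carrier (σ.arg f i))
    {j i : Fin (σ.n f)} (hj : j = i) (h : σ.arg f j = σ.arg f i) :
    cast (congrArg M.carrier h) (a j) = a i := by subst hj; rfl

lemma app_eval (f : σ.Sym) (ρ : Val M) :
    eval (Pattern.app f (fun i => Pattern.var (σ.arg f i) (i.val + 1))) ρ
      = M.interp f (fun i => ρ (σ.arg f i) (i.val + 1)) := by
  ext b
  simp only [eval, Set.mem_setOf_eq]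
  constructor
  · rintro ⟨a, h1, h2⟩
    have ha : a = fun i => ρ (σ.arg f i) (i.val + 1) := funext fun i => h1 i
    rwa [← ha]
  · intro hb
    exact ⟨_, fun i => rfl, hb⟩

lemma app_functional (f : σ.Sym) :
    Functional M (Pattern.app f (fun i => Pattern.var (σ.arg f i) (i.val + 1))) ↔
      ∀ a : ∀ i : Fin (σ.n f), M.carrier (σ.arg f i), ∃ b, M.interp f a = {b} := by
  constructor
  · intro hF a
    classical
    set ρ : Val M := fun s y =>
      if h : ∃ i : Fin (σ.n f), σ.arg f i = s ∧ y = i.val + 1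
        then cast (congrArg M.carrier h.choose_spec.1) (a h.choose)
        else Classical.choice (M.nonempty s) with hρdef
    have hρ : ∀ i, ρ (σ.arg f i) (i.val + 1) = a i := by
      intro i
      have hex : ∃ j : Fin (σ.n f), σ.arg f j = σ.arg f i ∧ i.val + 1 = j.val + 1 :=
        ⟨i, rfl, rfl⟩
      have hji : hex.choose = i := Fin.ext (by have := hex.choose_spec.2; omega)
      rw [hρdef]
      simp only [dif_pos hex]
      exact cast_tup_eq a hji hex.choose_spec.1
    rcases hF ρ with ⟨b, hb⟩
    rw [app_eval] at hb
    refine ⟨b, ?_⟩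
    rwa [show (fun i => ρ (σ.arg f i) (i.val + 1)) = a from funext hρ] at hb
  · intro h ρ
    rcases h (fun i => ρ (σ.arg f i) (i.val + 1)) with ⟨b, hb⟩
    exact ⟨b, by rw [app_eval, hb]⟩

end Aux4
end ML

/-- a pattern `φ` is functional in `M` iff `M ⊨ ∃y.(φ = y)` with
`y ∉ FV(φ)`; in particular `σ_M` is a total function iff
`M ⊨ ∃y. σ(x₁,…,xₙ) = y`. -/
theorem stmt18 {σ : ML.Signature} (d : σ.Sym) (hn : σ.n d = 1) (M : ML.Model σ)
    (hdef : ML.Sat M (ML.defAx d hn)) :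
    (∀ (φ : ML.Pattern σ (ML.arg1 d hn)) (y : ℕ),
      (⟨ML.arg1 d hn, y⟩ : (t : σ.S) × ℕ) ∉ ML.FV φ →
      (ML.Functional M φ ↔
        ML.Sat M (ML.Pattern.ex (ML.arg1 d hn) y
          (ML.eqP d hn φ (ML.Pattern.var (ML.arg1 d hn) y))))) ∧
    (∀ (f : σ.Sym) (hf : σ.res f = ML.arg1 d hn),
      ((∀ a : ∀ i : Fin (σ.n f), M.carrier (σ.arg f i), ∃ b, M.interp f a = {b}) ↔
        ML.Sat M (ML.Pattern.ex (ML.arg1 d hn) 0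
          (ML.eqP d hn
            (cast (by rw [hf])
              (ML.Pattern.app f (fun i => ML.Pattern.var (σ.arg f i) (i.val + 1))))
            (ML.Pattern.var (ML.arg1 d hn) 0))))) := by
  constructor
  · exact fun φ y hy => ML.part1 d hn hdef φ y hy
  · intro f hf
    have hfv : (⟨ML.arg1 d hn, 0⟩ : (t : σ.S) × ℕ) ∉
        ML.FV (cast (show ML.Pattern σ (σ.res f) = ML.Pattern σ (ML.arg1 d hn) by rw [hf])
          (ML.Pattern.app f (fun i => ML.Pattern.var (σ.arg f i) (i.val + 1)))) := by
      rw [ML.fv_cast hf]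
      intro hmem
      rcases Set.mem_iUnion.1 hmem with ⟨i, hi⟩
      have h0 : (0 : ℕ) = i.val + 1 := congrArg Sigma.snd hi
      omega
    rw [← ML.part1 d hn hdef _ 0 hfv, ML.functional_cast hf, ML.app_functional]
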